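/- For every nonnegative integer m, the sum over k from 0 to m of C(2k,k)^2 * C(3k,k) * C(k, m-k) * (-27)^(m-k) equals the sum over k from 0 to m of C(2k,k) * C(3k,k) * C(2(m-k), m-k) * C(3(m-k), m-k). -/

import Mathlib

open Finset

namespace Zud

def t (n : ℕ) : ℚ := (Nat.choose (2*n) n) * (Nat.choose (3*n) n)
def b (n : ℕ) : ℚ := (Nat.choose (2*n) n : ℚ)^2 * (Nat.choose (3*n) n)

lemma fact_ne (n : ℕ) : (n.factorial : ℚ) ≠ 0 := by
  exact_mod_cast n.factorial_ne_zero

lemma cc1 (n : ℕ) : ((Nat.choose (2*n) n : ℚ)) * ((n.factorial : ℚ) * (n.factorial : ℚ)) = ((2*n).factorial : ℚ) := by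
  have h1 : Nat.choose (2*n) n * n.factorial * n.factorial = (2*n).factorial := by
    have := Nat.choose_mul_factorial_mul_factorial (show n ≤ 2*n by omega)
    simpa [show 2*n-n = n by omega] using this
  have := congrArg (Nat.cast : ℕ → ℚ) h1
  push_cast at this
  linarith [this]

lemma cc2 (n : ℕ) : ((Nat.choose (3*n) n : ℚ)) * ((n.factorial : ℚ) * ((2*n).factorial : ℚ)) = ((3*n).factorial : ℚ) := by
  have h2 : Nat.choose (3*n) n * n.factorial * (2*n).factorial = (3*n).factorial := by
    have := Nat.choose_mul_factorial_mul_factorial (show n ≤ 3*n by omega)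
    simpa [show 3*n-n = 2*n by omega] using this
  have := congrArg (Nat.cast : ℕ → ℚ) h2
  push_cast at this
  linarith [this]

lemma t_eq (n : ℕ) : t n = ((3*n).factorial : ℚ) / (n.factorial : ℚ)^3 := by
  rw [eq_div_iff (pow_ne_zero _ (fact_ne n))]
  unfold t
  linear_combination ((Nat.choose (3*n) n : ℚ) * (n.factorial:ℚ)) * cc1 n + cc2 n

lemma b_eq (n : ℕ) : b n = ((2*n).factorial : ℚ) * ((3*n).factorial : ℚ) / (n.factorial : ℚ)^5 := by
  rw [eq_div_iff (pow_ne_zero _ (fact_ne n))]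
  unfold b
  linear_combination ((Nat.choose (2*n) n : ℚ) * (Nat.choose (3*n) n : ℚ) * (n.factorial:ℚ)^3
      + ((2*n).factorial : ℚ) * (Nat.choose (3*n) n : ℚ) * (n.factorial:ℚ)) * cc1 n
    + ((2*n).factorial : ℚ) * cc2 n

lemma t_succ (n : ℕ) : t (n+1) = 3*(3*(n:ℚ)+1)*(3*(n:ℚ)+2) / ((n:ℚ)+1)^2 * t n := by
  have h3 : ((3*(n+1)).factorial : ℚ) = (3*(n:ℚ)+3)*((3*(n:ℚ)+2)*((3*(n:ℚ)+1)*((3*n).factorial : ℚ))) := by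
    rw [show 3*(n+1) = (3*n+2)+1 by ring, Nat.factorial_succ, show 3*n+2 = (3*n+1)+1 by ring,
      Nat.factorial_succ, Nat.factorial_succ]
    push_cast; ring
  have hf : ((n+1).factorial : ℚ) = ((n:ℚ)+1) * (n.factorial : ℚ) := by
    rw [Nat.factorial_succ]; push_cast; ring
  rw [t_eq, t_eq, h3, hf]
  have h1 : (n.factorial : ℚ) ≠ 0 := fact_ne n
  have h2 : ((n:ℚ)+1) ≠ 0 := by positivity
  field_simp

lemma b_succ (n : ℕ) : b (n+1) = 6*(2*(n:ℚ)+1)*(3*(n:ℚ)+1)*(3*(n:ℚ)+2) / ((n:ℚ)+1)^3 * b n := by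
  have h3 : ((3*(n+1)).factorial : ℚ) = (3*(n:ℚ)+3)*((3*(n:ℚ)+2)*((3*(n:ℚ)+1)*((3*n).factorial : ℚ))) := by
    rw [show 3*(n+1) = (3*n+2)+1 by ring, Nat.factorial_succ, show 3*n+2 = (3*n+1)+1 by ring,
      Nat.factorial_succ, Nat.factorial_succ]
    push_cast; ring
  have h4 : ((2*(n+1)).factorial : ℚ) = (2*(n:ℚ)+2)*((2*(n:ℚ)+1)*((2*n).factorial : ℚ)) := by
    rw [show 2*(n+1) = (2*n+1)+1 by ring, Nat.factorial_succ, Nat.factorial_succ]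
    push_cast; ring
  have hf : ((n+1).factorial : ℚ) = ((n:ℚ)+1) * (n.factorial : ℚ) := by
    rw [Nat.factorial_succ]; push_cast; ring
  rw [b_eq, b_eq, h3, h4, hf]
  have h1 : (n.factorial : ℚ) ≠ 0 := fact_ne n
  have h2 : ((n:ℚ)+1) ≠ 0 := by positivity
  field_simp
  ring

lemma ch1 (n r : ℕ) : ((Nat.choose n (r+1) : ℚ)) = ((n:ℚ) - r) * (Nat.choose n r) / ((r:ℚ)+1) := by
  rw [eq_div_iff (by positivity : ((r:ℚ)+1) ≠ 0)]
  rcases lt_or_ge r n with h | h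
  · have hn := Nat.choose_succ_right_eq n r
    have := congrArg (Nat.cast : ℕ → ℚ) hn
    rw [Nat.cast_mul, Nat.cast_mul, Nat.cast_sub h.le] at this
    push_cast at this ⊢
    linarith [this]
  · have hz : Nat.choose n (r+1) = 0 := Nat.choose_eq_zero_of_lt (by omega)
    rcases eq_or_lt_of_le h with h' | h'
    · subst h'; simp [hz]
    · have hz2 : Nat.choose n r = 0 := Nat.choose_eq_zero_of_lt h'
      simp [hz, hz2]

lemma ch2 (n r : ℕ) : ((Nat.choose (n+1) (r+1) : ℚ)) = ((n:ℚ)+1) * (Nat.choose n r) / ((r:ℚ)+1) := by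
  rw [eq_div_iff (by positivity : ((r:ℚ)+1) ≠ 0)]
  have hn := Nat.add_one_mul_choose_eq n r
  have := congrArg (Nat.cast : ℕ → ℚ) hn
  push_cast at this
  linarith [this]


def fR (m k : ℕ) : ℚ := t k * t (m-k)
def fL (m k : ℕ) : ℚ := b k * (Nat.choose k (m-k)) * (-27:ℚ)^(m-k)

def HR (m k : ℕ) : ℚ := (k:ℚ)^2 * ( -432+2196*(k:ℚ)-3078*(k:ℚ)^2+1134*(k:ℚ)^3
    + (m:ℚ)*(-2484+7614*(k:ℚ)-5427*(k:ℚ)^2+729*(k:ℚ)^3)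
    + (m:ℚ)^2*(-4536+7452*(k:ℚ)-2187*(k:ℚ)^2) + (m:ℚ)^3*(-3159+2187*(k:ℚ)) - 729*(m:ℚ)^4 )
    * t k * t (m-k) / ((((m+1-k)*(m+2-k))^2 : ℕ) : ℚ)

def HL (m k : ℕ) : ℚ := (-729)*(k:ℚ)^2*((m:ℚ)+2)*((m:ℚ)+1-2*(k:ℚ)) * b k
    * (Nat.choose k (m+1-k)) * (-27:ℚ)^(m-k) / ((m-k+2 : ℕ) : ℚ)

lemma ptR (m k : ℕ) (hk : k < m) :
    (-81*((m:ℚ)+1)*(3*(m:ℚ)+2)*(3*(m:ℚ)+4)) * fR m k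
      + (3*(2*(m:ℚ)+3)*(9*(m:ℚ)^2+27*(m:ℚ)+22)) * fR (m+1) k
      + (-(((m:ℚ)+2)^3)) * fR (m+2) k = HR m (k+1) - HR m k := by
  obtain ⟨j, rfl⟩ : ∃ j, m = k+j+1 := ⟨m-k-1, by omega⟩
  simp only [fR, HR,
    show k+j+1-k = j+1 by omega, show k+j+1+1-k = j+2 by omega,
    show k+j+1+2-k = j+3 by omega, show k+j+1-(k+1) = j by omega,
    show k+j+1+1-(k+1) = j+1 by omega, show k+j+1+1-(k+1+1) = j by omega,
    show k+j+1+2-(k+1) = j+2 by omega, show k+j+1+2-(k+1+1) = j+1 by omega]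
  have h3 : t (j+3) = 3*(3*((j:ℚ)+2)+1)*(3*((j:ℚ)+2)+2) / (((j:ℚ)+2)+1)^2 * t (j+2) := by
    rw [show j+3 = (j+2)+1 by omega, t_succ]; push_cast; ring
  have h2 : t (j+2) = 3*(3*((j:ℚ)+1)+1)*(3*((j:ℚ)+1)+2) / (((j:ℚ)+1)+1)^2 * t (j+1) := by
    rw [show j+2 = (j+1)+1 by omega, t_succ]; push_cast; ring
  have h1 : t (j+1) = 3*(3*(j:ℚ)+1)*(3*(j:ℚ)+2) / ((j:ℚ)+1)^2 * t j := by
    rw [t_succ]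
  have hK : t (k+1) = 3*(3*(k:ℚ)+1)*(3*(k:ℚ)+2) / ((k:ℚ)+1)^2 * t k := t_succ k
  rw [h3, h2, h1, hK]
  have d1 : ((j:ℚ)+1) ≠ 0 := by positivity
  have d2 : ((j:ℚ)+2) ≠ 0 := by positivity
  have d3 : ((j:ℚ)+3) ≠ 0 := by positivity
  have d4 : ((k:ℚ)+1) ≠ 0 := by positivity
  have e1 : ((((j+2)*(j+3))^2 : ℕ) : ℚ) = (((j:ℚ)+2)*((j:ℚ)+3))^2 := by push_cast; ring
  have e2 : ((((j+1)*(j+2))^2 : ℕ) : ℚ) = (((j:ℚ)+1)*((j:ℚ)+2))^2 := by push_cast; ring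
  rw [e1, e2]
  push_cast
  field_simp
  ring

lemma ptL (m k : ℕ) (hk : k < m) :
    (-81*((m:ℚ)+1)*(3*(m:ℚ)+2)*(3*(m:ℚ)+4)) * fL m k
      + (3*(2*(m:ℚ)+3)*(9*(m:ℚ)^2+27*(m:ℚ)+22)) * fL (m+1) k
      + (-(((m:ℚ)+2)^3)) * fL (m+2) k = HL m (k+1) - HL m k := by
  obtain ⟨j, rfl⟩ : ∃ j, m = k+j+1 := ⟨m-k-1, by omega⟩
  simp only [fL, HL,
    show k+j+1-k = j+1 by omega, show k+j+1+1-k = j+2 by omega,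
    show k+j+1+2-k = j+3 by omega, show k+j+1-(k+1) = j by omega,
    show k+j+1+1-(k+1) = j+1 by omega, show k+j+1-k+2 = j+3 by omega,
    show k+j+1-(k+1)+2 = j+2 by omega]
  have hc3 : ((Nat.choose k (j+3) : ℚ)) = ((k:ℚ) - ((j:ℚ)+2)) * (Nat.choose k (j+2)) / (((j:ℚ)+2)+1) := by
    rw [show j+3 = (j+2)+1 by omega, ch1]; push_cast; ring
  have hc2 : ((Nat.choose k (j+2) : ℚ)) = ((k:ℚ) - ((j:ℚ)+1)) * (Nat.choose k (j+1)) / (((j:ℚ)+1)+1) := by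
    rw [show j+2 = (j+1)+1 by omega, ch1]; push_cast; ring
  have hc1 : ((Nat.choose k (j+1) : ℚ)) = ((k:ℚ) - (j:ℚ)) * (Nat.choose k j) / ((j:ℚ)+1) := ch1 k j
  have hw : ((Nat.choose (k+1) (j+1) : ℚ)) = ((k:ℚ)+1) * (Nat.choose k j) / ((j:ℚ)+1) := ch2 k j
  have hb : b (k+1) = 6*(2*(k:ℚ)+1)*(3*(k:ℚ)+1)*(3*(k:ℚ)+2) / ((k:ℚ)+1)^3 * b k := b_succ k
  have hp3 : ((-27:ℚ))^(j+3) = (-27:ℚ)^j * (-19683) := by rw [pow_add]; norm_num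
  have hp2 : ((-27:ℚ))^(j+2) = (-27:ℚ)^j * 729 := by rw [pow_add]; norm_num
  have hp1 : ((-27:ℚ))^(j+1) = (-27:ℚ)^j * (-27) := by rw [pow_add]; norm_num
  rw [hc3, hc2, hc1, hw, hb, hp3, hp2, hp1]
  have d1 : ((j:ℚ)+1) ≠ 0 := by positivity
  have d2 : ((j:ℚ)+2) ≠ 0 := by positivity
  have d3 : ((j:ℚ)+3) ≠ 0 := by positivity
  have d4 : ((k:ℚ)+1) ≠ 0 := by positivity
  have e1 : ((j+3 : ℕ) : ℚ) = (j:ℚ)+3 := by push_cast; ring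
  have e2 : ((j+2 : ℕ) : ℚ) = (j:ℚ)+2 := by push_cast; ring
  rw [e1, e2]
  push_cast
  field_simp
  ring

lemma t0 : t 0 = 1 := by simp [t]
lemma t1 : t 1 = 6 := by
  have h1 : Nat.choose 2 1 = 2 := rfl
  have h2 : Nat.choose 3 1 = 3 := rfl
  simp [t]; norm_num [h1, h2]
lemma t2 : t 2 = 90 := by
  have h1 : Nat.choose 4 2 = 6 := rfl
  have h2 : Nat.choose 6 2 = 15 := rfl
  simp [t]; norm_num [h1, h2]

lemma bdR (m : ℕ) :
    HR m m + ((-81*((m:ℚ)+1)*(3*(m:ℚ)+2)*(3*(m:ℚ)+4)) * fR m m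
      + (3*(2*(m:ℚ)+3)*(9*(m:ℚ)^2+27*(m:ℚ)+22)) * fR (m+1) m
      + (-(((m:ℚ)+2)^3)) * fR (m+2) m)
      + (3*(2*(m:ℚ)+3)*(9*(m:ℚ)^2+27*(m:ℚ)+22)) * fR (m+1) (m+1)
      + (-(((m:ℚ)+2)^3)) * (fR (m+2) (m+1) + fR (m+2) (m+2)) = 0 := by
  simp only [fR, HR, show m-m = 0 by omega, show m+1-m = 1 by omega,
    show m+2-m = 2 by omega, show m+1-(m+1) = 0 by omega,
    show m+2-(m+1) = 1 by omega, show m+2-(m+2) = 0 by omega]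
  have h2 : t (m+2) = 3*(3*((m:ℚ)+1)+1)*(3*((m:ℚ)+1)+2) / (((m:ℚ)+1)+1)^2 * t (m+1) := by
    rw [show m+2 = (m+1)+1 by omega, t_succ]; push_cast; ring
  have h1 : t (m+1) = 3*(3*(m:ℚ)+1)*(3*(m:ℚ)+2) / ((m:ℚ)+1)^2 * t m := t_succ m
  rw [h2, h1, t0, t1, t2]
  have d1 : ((m:ℚ)+1) ≠ 0 := by positivity
  have d2 : ((m:ℚ)+2) ≠ 0 := by positivity
  norm_num
  field_simp
  ring

lemma bdL (m : ℕ) :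
    HL m m + ((-81*((m:ℚ)+1)*(3*(m:ℚ)+2)*(3*(m:ℚ)+4)) * fL m m
      + (3*(2*(m:ℚ)+3)*(9*(m:ℚ)^2+27*(m:ℚ)+22)) * fL (m+1) m
      + (-(((m:ℚ)+2)^3)) * fL (m+2) m)
      + (3*(2*(m:ℚ)+3)*(9*(m:ℚ)^2+27*(m:ℚ)+22)) * fL (m+1) (m+1)
      + (-(((m:ℚ)+2)^3)) * (fL (m+2) (m+1) + fL (m+2) (m+2)) = 0 := by
  simp only [fL, HL, show m-m = 0 by omega, show m+1-m = 1 by omega,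
    show m+2-m = 2 by omega, show m+1-(m+1) = 0 by omega,
    show m+2-(m+1) = 1 by omega, show m+2-(m+2) = 0 by omega,
    show m-m+2 = 2 by omega]
  have hc1 : ((Nat.choose m 1 : ℚ)) = (m:ℚ) := by
    rw [Nat.choose_one_right]
  have hc2 : ((Nat.choose m 2 : ℚ)) = ((m:ℚ) - 1) * (m:ℚ) / 2 := by
    rw [show (2:ℕ) = 1+1 from rfl, ch1, hc1]; push_cast; ring
  have hc1' : ((Nat.choose (m+1) 1 : ℚ)) = (m:ℚ)+1 := by
    rw [Nat.choose_one_right]; push_cast; ring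
  have hb2 : b (m+2) = 6*(2*((m:ℚ)+1)+1)*(3*((m:ℚ)+1)+1)*(3*((m:ℚ)+1)+2) / (((m:ℚ)+1)+1)^3 * b (m+1) := by
    rw [show m+2 = (m+1)+1 by omega, b_succ]; push_cast; ring
  have hb1 : b (m+1) = 6*(2*(m:ℚ)+1)*(3*(m:ℚ)+1)*(3*(m:ℚ)+2) / ((m:ℚ)+1)^3 * b m := b_succ m
  rw [hc2, hb2, hb1, hc1, hc1']
  have d1 : ((m:ℚ)+1) ≠ 0 := by positivity
  have d2 : ((m:ℚ)+2) ≠ 0 := by positivity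
  norm_num
  field_simp
  ring

def AR (m : ℕ) : ℚ := ∑ k ∈ range (m+1), fR m k
def AL (m : ℕ) : ℚ := ∑ k ∈ range (m+1), fL m k

lemma recR (m : ℕ) :
    (-81*((m:ℚ)+1)*(3*(m:ℚ)+2)*(3*(m:ℚ)+4)) * AR m
      + (3*(2*(m:ℚ)+3)*(9*(m:ℚ)^2+27*(m:ℚ)+22)) * AR (m+1)
      + (-(((m:ℚ)+2)^3)) * AR (m+2) = 0 := by
  have h1 : AR (m+1) = (∑ k ∈ range (m+1), fR (m+1) k) + fR (m+1) (m+1) := by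
    rw [AR, sum_range_succ]
  have h2 : AR (m+2) = (∑ k ∈ range (m+1), fR (m+2) k)
      + (fR (m+2) (m+1) + fR (m+2) (m+2)) := by
    rw [AR, show m+2+1 = (m+1)+1+1 by omega, sum_range_succ, sum_range_succ]; ring
  have h3 : ∑ k ∈ range (m+1), ((-81*((m:ℚ)+1)*(3*(m:ℚ)+2)*(3*(m:ℚ)+4)) * fR m k
      + (3*(2*(m:ℚ)+3)*(9*(m:ℚ)^2+27*(m:ℚ)+22)) * fR (m+1) k
      + (-(((m:ℚ)+2)^3)) * fR (m+2) k)
      = (-81*((m:ℚ)+1)*(3*(m:ℚ)+2)*(3*(m:ℚ)+4)) * AR m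
      + (3*(2*(m:ℚ)+3)*(9*(m:ℚ)^2+27*(m:ℚ)+22)) * (∑ k ∈ range (m+1), fR (m+1) k)
      + (-(((m:ℚ)+2)^3)) * (∑ k ∈ range (m+1), fR (m+2) k) := by
    rw [sum_add_distrib, sum_add_distrib, ← mul_sum, ← mul_sum, ← mul_sum, AR]
  have h4 : ∑ k ∈ range (m+1), ((-81*((m:ℚ)+1)*(3*(m:ℚ)+2)*(3*(m:ℚ)+4)) * fR m k
      + (3*(2*(m:ℚ)+3)*(9*(m:ℚ)^2+27*(m:ℚ)+22)) * fR (m+1) k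
      + (-(((m:ℚ)+2)^3)) * fR (m+2) k)
      = (HR m m - HR m 0) + ((-81*((m:ℚ)+1)*(3*(m:ℚ)+2)*(3*(m:ℚ)+4)) * fR m m
      + (3*(2*(m:ℚ)+3)*(9*(m:ℚ)^2+27*(m:ℚ)+22)) * fR (m+1) m
      + (-(((m:ℚ)+2)^3)) * fR (m+2) m) := by
    rw [sum_range_succ]
    congr 1
    rw [← sum_range_sub (fun k => HR m k) m]
    exact sum_congr rfl (fun k hk => ptR m k (mem_range.mp hk))
  have h0 : HR m 0 = 0 := by simp [HR]
  have hb := bdR m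
  linear_combination (3*(2*(m:ℚ)+3)*(9*(m:ℚ)^2+27*(m:ℚ)+22)) * h1
    + (-(((m:ℚ)+2)^3)) * h2 - h3 + h4 + hb - h0

lemma recL (m : ℕ) :
    (-81*((m:ℚ)+1)*(3*(m:ℚ)+2)*(3*(m:ℚ)+4)) * AL m
      + (3*(2*(m:ℚ)+3)*(9*(m:ℚ)^2+27*(m:ℚ)+22)) * AL (m+1)
      + (-(((m:ℚ)+2)^3)) * AL (m+2) = 0 := by
  have h1 : AL (m+1) = (∑ k ∈ range (m+1), fL (m+1) k) + fL (m+1) (m+1) := by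
    rw [AL, sum_range_succ]
  have h2 : AL (m+2) = (∑ k ∈ range (m+1), fL (m+2) k)
      + (fL (m+2) (m+1) + fL (m+2) (m+2)) := by
    rw [AL, show m+2+1 = (m+1)+1+1 by omega, sum_range_succ, sum_range_succ]; ring
  have h3 : ∑ k ∈ range (m+1), ((-81*((m:ℚ)+1)*(3*(m:ℚ)+2)*(3*(m:ℚ)+4)) * fL m k
      + (3*(2*(m:ℚ)+3)*(9*(m:ℚ)^2+27*(m:ℚ)+22)) * fL (m+1) k
      + (-(((m:ℚ)+2)^3)) * fL (m+2) k)
      = (-81*((m:ℚ)+1)*(3*(m:ℚ)+2)*(3*(m:ℚ)+4)) * AL m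
      + (3*(2*(m:ℚ)+3)*(9*(m:ℚ)^2+27*(m:ℚ)+22)) * (∑ k ∈ range (m+1), fL (m+1) k)
      + (-(((m:ℚ)+2)^3)) * (∑ k ∈ range (m+1), fL (m+2) k) := by
    rw [sum_add_distrib, sum_add_distrib, ← mul_sum, ← mul_sum, ← mul_sum, AL]
  have h4 : ∑ k ∈ range (m+1), ((-81*((m:ℚ)+1)*(3*(m:ℚ)+2)*(3*(m:ℚ)+4)) * fL m k
      + (3*(2*(m:ℚ)+3)*(9*(m:ℚ)^2+27*(m:ℚ)+22)) * fL (m+1) k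
      + (-(((m:ℚ)+2)^3)) * fL (m+2) k)
      = (HL m m - HL m 0) + ((-81*((m:ℚ)+1)*(3*(m:ℚ)+2)*(3*(m:ℚ)+4)) * fL m m
      + (3*(2*(m:ℚ)+3)*(9*(m:ℚ)^2+27*(m:ℚ)+22)) * fL (m+1) m
      + (-(((m:ℚ)+2)^3)) * fL (m+2) m) := by
    rw [sum_range_succ]
    congr 1
    rw [← sum_range_sub (fun k => HL m k) m]
    exact sum_congr rfl (fun k hk => ptL m k (mem_range.mp hk))
  have h0 : HL m 0 = 0 := by simp [HL]
  have hb := bdL m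
  linear_combination (3*(2*(m:ℚ)+3)*(9*(m:ℚ)^2+27*(m:ℚ)+22)) * h1
    + (-(((m:ℚ)+2)^3)) * h2 - h3 + h4 + hb - h0

lemma main : ∀ m : ℕ, AL m = AR m := by
  have base0 : AL 0 = AR 0 := by
    simp [AL, AR, fL, fR, t, b]
  have base1 : AL 1 = AR 1 := by
    have h1 : Nat.choose 2 1 = 2 := rfl
    have h2 : Nat.choose 3 1 = 3 := rfl
    simp [AL, AR, fL, fR, t, b, sum_range_succ]
    norm_num [h1, h2]
  intro m
  induction m using Nat.twoStepInduction with
  | zero => exact base0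
  | one => exact base1
  | more n ih1 ih2 =>
    have h3 : (((n:ℚ)+2)^3) ≠ 0 := by positivity
    have key : (((n:ℚ)+2)^3) * AL (n+2) = (((n:ℚ)+2)^3) * AR (n+2) := by
      linear_combination (recR n) - (recL n)
        + (-81*((n:ℚ)+1)*(3*(n:ℚ)+2)*(3*(n:ℚ)+4)) * ih1
        + (3*(2*(n:ℚ)+3)*(9*(n:ℚ)^2+27*(n:ℚ)+22)) * ih2
    exact mul_left_cancel₀ h3 key

end Zud

theorem stmt_0 (m : ℕ) :
    ∑ k ∈ Finset.range (m + 1),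
      ((Nat.choose (2 * k) k : ℤ) ^ 2 * Nat.choose (3 * k) k *
        Nat.choose k (m - k) * (-27) ^ (m - k))
    = ∑ k ∈ Finset.range (m + 1),
      ((Nat.choose (2 * k) k : ℤ) * Nat.choose (3 * k) k *
        Nat.choose (2 * (m - k)) (m - k) * Nat.choose (3 * (m - k)) (m - k)) := by
  have h := Zud.main m
  have hL : ((∑ k ∈ Finset.range (m + 1),
      ((Nat.choose (2 * k) k : ℤ) ^ 2 * Nat.choose (3 * k) k *
        Nat.choose k (m - k) * (-27) ^ (m - k)) : ℤ) : ℚ) = Zud.AL m := by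
    rw [Zud.AL]
    push_cast
    refine Finset.sum_congr rfl (fun k _ => ?_)
    simp only [Zud.fL, Zud.b]
    try ring
  have hR : ((∑ k ∈ Finset.range (m + 1),
      ((Nat.choose (2 * k) k : ℤ) * Nat.choose (3 * k) k *
        Nat.choose (2 * (m - k)) (m - k) * Nat.choose (3 * (m - k)) (m - k)) : ℤ) : ℚ) = Zud.AR m := by
    rw [Zud.AR]
    push_cast
    refine Finset.sum_congr rfl (fun k _ => ?_)
    simp only [Zud.fR, Zud.t]
    try ring
  have : ((∑ k ∈ Finset.range (m + 1),
      ((Nat.choose (2 * k) k : ℤ) ^ 2 * Nat.choose (3 * k) k *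
        Nat.choose k (m - k) * (-27) ^ (m - k)) : ℤ) : ℚ)
      = ((∑ k ∈ Finset.range (m + 1),
      ((Nat.choose (2 * k) k : ℤ) * Nat.choose (3 * k) k *
        Nat.choose (2 * (m - k)) (m - k) * Nat.choose (3 * (m - k)) (m - k)) : ℤ) : ℚ) :=
    hL.trans (h.trans hR.symm)
  exact_mod_cast this
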